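/- For the transformation G(Γ) := Γ ∪ ⋃_{i=1}^{t} [(x_i ∨ Γ) ∪ (¬x_i ∨ Γ)] with x₁,…,x_t variables not in Γ: if Γ is unsatisfiable, then no clause C containing a literal of some x_i (and using only variables of G(Γ)) is a blocked clause for that literal with respect to G(Γ). -/
import Mathlib


open Classical

abbrev Var := ℕ
abbrev Lit := Var × Bool

def negLit (l : Lit) : Lit := (l.1, !l.2)

abbrev Clause := Finset Lit

/-- A set of literals is tautological if it contains a complementary pair. -/
def Tauto (S : Finset Lit) : Prop := ∃ l ∈ S, negLit l ∈ S

abbrev CNF := Set Clause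

abbrev Assign := Var → Bool

def SatLit (α : Assign) (l : Lit) : Prop := α l.1 = l.2
def SatClause (α : Assign) (C : Clause) : Prop := ∃ l ∈ C, SatLit α l
def SatCNF (α : Assign) (Γ : CNF) : Prop := ∀ C ∈ Γ, SatClause α C
def Satisfiable (Γ : CNF) : Prop := ∃ α, SatCNF α Γ
def Equisat (Γ Δ : CNF) : Prop := Satisfiable Γ ↔ Satisfiable Δ

/-- `C` is a blocked clause for the literal `p` with respect to `Γ`. -/
def Blocked (C : Clause) (p : Lit) (Γ : CNF) : Prop :=
  p ∈ C ∧ ∀ D ∈ Γ, negLit p ∈ D → Tauto (C.erase p ∪ D.erase (negLit p))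

def negSet (L : Finset Lit) : Finset Lit := L.image negLit

/-- `C` is a set-blocked clause for `L` with respect to `Γ`. -/
def SetBlocked (C : Clause) (L : Finset Lit) (Γ : CNF) : Prop :=
  L.Nonempty ∧ L ⊆ C ∧
    ∀ D ∈ Γ, (D ∩ negSet L).Nonempty → D ∩ L = ∅ →
      Tauto ((C \ L) ∪ (D \ negSet L))

def varsClause (C : Clause) : Finset Var := C.image Prod.fst
def varsCNF (Γ : CNF) : Set Var := {v | ∃ C ∈ Γ, v ∈ varsClause C}

/-- Partial assignments. -/
abbrev PAssign := Var → Option Bool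

def restrictClause (α : PAssign) (C : Clause) : Clause :=
  C.filter fun l => α l.1 ≠ some (!l.2)

def PSatClause' (α : PAssign) (C : Clause) : Prop := ∃ l ∈ C, α l.1 = some l.2

def restrictCNF (α : PAssign) (Γ : CNF) : CNF :=
  {E | ∃ C ∈ Γ, ¬ PSatClause' α C ∧ E = restrictClause α C}

/-- `E` is a resolvent of `F` and `G`. -/
def Resolvent (E F G : Clause) : Prop :=
  ∃ (x : Var) (A B : Clause), x ∉ varsClause A ∧ x ∉ varsClause B ∧
    F = insert (x, true) A ∧ G = insert (x, false) B ∧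
    E = A ∪ B ∧ ¬ Tauto (A ∪ B)

/-- One step of a resolution proof: add a resolvent or a weakening. -/
def ResStep (Γ Γ' : CNF) : Prop :=
  ∃ C, Γ' = Γ ∪ {C} ∧
    ((∃ F ∈ Γ, ∃ G ∈ Γ, Resolvent C F G) ∨ (∃ D ∈ Γ, D ⊆ C ∧ ¬ Tauto C))

/-- A resolution proof (refutation) of `Γ`. -/
def ResProofOf (Γ : CNF) (prf : List CNF) : Prop :=
  prf.head? = some Γ ∧ (∃ Δ, prf.getLast? = some Δ ∧ (∅ : Clause) ∈ Δ) ∧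
    List.Chain' ResStep prf

/-- One step of a unit propagation proof: resolve against a unit clause, or weaken. -/
def UnitStep (Γ Γ' : CNF) : Prop :=
  ∃ C, Γ' = Γ ∪ {C} ∧
    ((∃ l, ({negLit l} : Clause) ∈ Γ ∧ l.1 ∉ varsClause C ∧ insert l C ∈ Γ)
      ∨ (∃ D ∈ Γ, D ⊆ C ∧ ¬ Tauto C))

/-- `Γ` has a unit propagation refutation. -/
def UPRefutes (Γ : CNF) : Prop :=
  ∃ prf : List CNF, prf.head? = some Γ ∧ (∃ Δ, prf.getLast? = some Δ ∧ (∅ : Clause) ∈ Δ) ∧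
    List.Chain' UnitStep prf

def negUnits (L : Finset Lit) : CNF := {C | ∃ p ∈ L, C = {negLit p}}

/-- `Γ ⊢₁ C`. -/
def UPDerives (Γ : CNF) (C : Clause) : Prop := UPRefutes (Γ ∪ negUnits C)

/-- Partial assignments as consistent sets of literals. -/
def Consistent (α : Set Lit) : Prop := ∀ l ∈ α, negLit l ∉ α
def PSatClause (α : Set Lit) (C : Clause) : Prop := ∃ l ∈ C, l ∈ α
def PSatCNF (α : Set Lit) (Γ : CNF) : Prop := ∀ C ∈ Γ, PSatClause α C
def MinSat (α : Set Lit) (Γ : CNF) : Prop :=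
  Consistent α ∧ PSatCNF α Γ ∧ ∀ β ⊂ α, ¬ PSatCNF β Γ

/-- `μ(Γ)`: clauses whose negation minimally satisfies `Γ`. -/
def mu (Γ : CNF) : CNF := {E | MinSat (↑(E.image negLit)) Γ}

/-- Projection of `Γ` onto a literal. -/
def proj (p : Lit) (Γ : CNF) : CNF := {E | ∃ D ∈ Γ, p ∈ D ∧ E = D.erase p}

/-- The transformation `G(Γ)`. -/
def Gtrans (Γ : CNF) (t : ℕ) (xs : Fin t → Var) : CNF :=
  Γ ∪ {E | ∃ (i : Fin t) (D : Clause), D ∈ Γ ∧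
        (E = insert (xs i, true) D ∨ E = insert (xs i, false) D)}

/-- for unsatisfiable `Γ`, no clause is blocked for a literal of a
new variable `x_i` with respect to `G(Γ)`. -/
theorem Gtrans_no_blocked_on_new (Γ : CNF) (hΓ : ∀ D ∈ Γ, ¬ Tauto D)
    (t : ℕ) (xs : Fin t → Var) (hxs : ∀ i, xs i ∉ varsCNF Γ)
    (hunsat : ¬ Satisfiable Γ)
    (C : Clause) (hC : ¬ Tauto C) (p : Lit) (i : Fin t) (hp : p.1 = xs i)
    (hpC : p ∈ C) (hvars : ↑(varsClause C) ⊆ varsCNF (Gtrans Γ t xs)) :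
    ¬ Blocked C p (Gtrans Γ t xs) := by
  rintro ⟨-, hbl⟩
  apply hunsat
  refine ⟨fun v => if ((v, true) : Lit) ∈ C.erase p then false else true, ?_⟩
  intro D hD
  have hnpD : negLit p ∉ D := by
    intro h
    exact hxs i ⟨D, hD, by
      have := Finset.mem_image_of_mem Prod.fst h
      simpa [varsClause, negLit, hp] using this⟩
  have hD' : insert (negLit p) D ∈ Gtrans Γ t xs := by
    right
    refine ⟨i, D, hD, ?_⟩
    have hnp : negLit p = (xs i, !p.2) := by simp [negLit, hp]
    cases hb : p.2
    · left; rw [hnp, hb]; norm_num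
    · right; rw [hnp, hb]; norm_num
  have htaut := hbl _ hD' (Finset.mem_insert_self _ _)
  rw [Finset.erase_insert hnpD] at htaut
  obtain ⟨l, hl, hnl⟩ := htaut
  -- Find m ∈ D with negLit m ∈ C.erase p
  have key : ∃ m ∈ D, negLit m ∈ C.erase p := by
    rcases Finset.mem_union.1 hl with h1 | h1 <;>
      rcases Finset.mem_union.1 hnl with h2 | h2
    · exact absurd ⟨l, Finset.mem_of_mem_erase h1,
        Finset.mem_of_mem_erase h2⟩ hC
    · exact ⟨negLit l, h2, by simpa [negLit] using h1⟩
    · exact ⟨l, h1, h2⟩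
    · exact absurd ⟨l, h1, h2⟩ (hΓ D hD)
  obtain ⟨m, hmD, hmC⟩ := key
  refine ⟨m, hmD, ?_⟩
  show (if ((m.1, true) : Lit) ∈ C.erase p then false else true) = m.2
  cases hb : m.2
  · rw [if_pos]; simpa [negLit, hb] using hmC
  · rw [if_neg]
    intro htrue
    exact hC ⟨(m.1, true), Finset.mem_of_mem_erase htrue, by
      have : ((m.1, false) : Lit) ∈ C.erase p := by simpa [negLit, hb] using hmC
      simpa [negLit] using Finset.mem_of_mem_erase this⟩
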